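/- The alternating group A₅ does not admit an unmixed Beauville structure. -/

import Mathlib

open Equiv

set_option maxRecDepth 200000
set_option maxHeartbeats 4000000

def LA : List (Equiv.Perm (Fin 5)) := [
  (1 : Equiv.Perm (Fin 5)),
  Equiv.swap (2:Fin 5) 3 * Equiv.swap (3:Fin 5) 4,
  Equiv.swap (2:Fin 5) 4 * Equiv.swap (4:Fin 5) 3,
  Equiv.swap (1:Fin 5) 2 * Equiv.swap (3:Fin 5) 4,
  Equiv.swap (1:Fin 5) 2 * Equiv.swap (2:Fin 5) 3,
  Equiv.swap (1:Fin 5) 2 * Equiv.swap (2:Fin 5) 4,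
  Equiv.swap (1:Fin 5) 3 * Equiv.swap (3:Fin 5) 2,
  Equiv.swap (1:Fin 5) 3 * Equiv.swap (3:Fin 5) 4,
  Equiv.swap (1:Fin 5) 3 * Equiv.swap (2:Fin 5) 4,
  Equiv.swap (1:Fin 5) 4 * Equiv.swap (4:Fin 5) 2,
  Equiv.swap (1:Fin 5) 4 * Equiv.swap (4:Fin 5) 3,
  Equiv.swap (1:Fin 5) 4 * Equiv.swap (2:Fin 5) 3,
  Equiv.swap (0:Fin 5) 1 * Equiv.swap (3:Fin 5) 4,
  Equiv.swap (0:Fin 5) 1 * Equiv.swap (2:Fin 5) 3,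
  Equiv.swap (0:Fin 5) 1 * Equiv.swap (2:Fin 5) 4,
  Equiv.swap (0:Fin 5) 1 * Equiv.swap (1:Fin 5) 2,
  Equiv.swap (0:Fin 5) 1 * Equiv.swap (1:Fin 5) 2 * Equiv.swap (2:Fin 5) 3 * Equiv.swap (3:Fin 5) 4,
  Equiv.swap (0:Fin 5) 1 * Equiv.swap (1:Fin 5) 2 * Equiv.swap (2:Fin 5) 4 * Equiv.swap (4:Fin 5) 3,
  Equiv.swap (0:Fin 5) 1 * Equiv.swap (1:Fin 5) 3 * Equiv.swap (3:Fin 5) 4 * Equiv.swap (4:Fin 5) 2,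
  Equiv.swap (0:Fin 5) 1 * Equiv.swap (1:Fin 5) 3,
  Equiv.swap (0:Fin 5) 1 * Equiv.swap (1:Fin 5) 3 * Equiv.swap (3:Fin 5) 2 * Equiv.swap (2:Fin 5) 4,
  Equiv.swap (0:Fin 5) 1 * Equiv.swap (1:Fin 5) 4 * Equiv.swap (4:Fin 5) 3 * Equiv.swap (3:Fin 5) 2,
  Equiv.swap (0:Fin 5) 1 * Equiv.swap (1:Fin 5) 4,
  Equiv.swap (0:Fin 5) 1 * Equiv.swap (1:Fin 5) 4 * Equiv.swap (4:Fin 5) 2 * Equiv.swap (2:Fin 5) 3,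
  Equiv.swap (0:Fin 5) 2 * Equiv.swap (2:Fin 5) 1,
  Equiv.swap (0:Fin 5) 2 * Equiv.swap (2:Fin 5) 3 * Equiv.swap (3:Fin 5) 4 * Equiv.swap (4:Fin 5) 1,
  Equiv.swap (0:Fin 5) 2 * Equiv.swap (2:Fin 5) 4 * Equiv.swap (4:Fin 5) 3 * Equiv.swap (3:Fin 5) 1,
  Equiv.swap (0:Fin 5) 2 * Equiv.swap (3:Fin 5) 4,
  Equiv.swap (0:Fin 5) 2 * Equiv.swap (2:Fin 5) 3,
  Equiv.swap (0:Fin 5) 2 * Equiv.swap (2:Fin 5) 4,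
  Equiv.swap (0:Fin 5) 2 * Equiv.swap (1:Fin 5) 3,
  Equiv.swap (0:Fin 5) 2 * Equiv.swap (2:Fin 5) 1 * Equiv.swap (1:Fin 5) 3 * Equiv.swap (3:Fin 5) 4,
  Equiv.swap (0:Fin 5) 2 * Equiv.swap (2:Fin 5) 4 * Equiv.swap (4:Fin 5) 1 * Equiv.swap (1:Fin 5) 3,
  Equiv.swap (0:Fin 5) 2 * Equiv.swap (1:Fin 5) 4,
  Equiv.swap (0:Fin 5) 2 * Equiv.swap (2:Fin 5) 1 * Equiv.swap (1:Fin 5) 4 * Equiv.swap (4:Fin 5) 3,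
  Equiv.swap (0:Fin 5) 2 * Equiv.swap (2:Fin 5) 3 * Equiv.swap (3:Fin 5) 1 * Equiv.swap (1:Fin 5) 4,
  Equiv.swap (0:Fin 5) 3 * Equiv.swap (3:Fin 5) 4 * Equiv.swap (4:Fin 5) 2 * Equiv.swap (2:Fin 5) 1,
  Equiv.swap (0:Fin 5) 3 * Equiv.swap (3:Fin 5) 1,
  Equiv.swap (0:Fin 5) 3 * Equiv.swap (3:Fin 5) 2 * Equiv.swap (2:Fin 5) 4 * Equiv.swap (4:Fin 5) 1,
  Equiv.swap (0:Fin 5) 3 * Equiv.swap (3:Fin 5) 2,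
  Equiv.swap (0:Fin 5) 3 * Equiv.swap (3:Fin 5) 4,
  Equiv.swap (0:Fin 5) 3 * Equiv.swap (2:Fin 5) 4,
  Equiv.swap (0:Fin 5) 3 * Equiv.swap (3:Fin 5) 4 * Equiv.swap (4:Fin 5) 1 * Equiv.swap (1:Fin 5) 2,
  Equiv.swap (0:Fin 5) 3 * Equiv.swap (1:Fin 5) 2,
  Equiv.swap (0:Fin 5) 3 * Equiv.swap (3:Fin 5) 1 * Equiv.swap (1:Fin 5) 2 * Equiv.swap (2:Fin 5) 4,
  Equiv.swap (0:Fin 5) 3 * Equiv.swap (3:Fin 5) 1 * Equiv.swap (1:Fin 5) 4 * Equiv.swap (4:Fin 5) 2,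
  Equiv.swap (0:Fin 5) 3 * Equiv.swap (3:Fin 5) 2 * Equiv.swap (2:Fin 5) 1 * Equiv.swap (1:Fin 5) 4,
  Equiv.swap (0:Fin 5) 3 * Equiv.swap (1:Fin 5) 4,
  Equiv.swap (0:Fin 5) 4 * Equiv.swap (4:Fin 5) 3 * Equiv.swap (3:Fin 5) 2 * Equiv.swap (2:Fin 5) 1,
  Equiv.swap (0:Fin 5) 4 * Equiv.swap (4:Fin 5) 1,
  Equiv.swap (0:Fin 5) 4 * Equiv.swap (4:Fin 5) 2 * Equiv.swap (2:Fin 5) 3 * Equiv.swap (3:Fin 5) 1,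
  Equiv.swap (0:Fin 5) 4 * Equiv.swap (4:Fin 5) 2,
  Equiv.swap (0:Fin 5) 4 * Equiv.swap (4:Fin 5) 3,
  Equiv.swap (0:Fin 5) 4 * Equiv.swap (2:Fin 5) 3,
  Equiv.swap (0:Fin 5) 4 * Equiv.swap (4:Fin 5) 3 * Equiv.swap (3:Fin 5) 1 * Equiv.swap (1:Fin 5) 2,
  Equiv.swap (0:Fin 5) 4 * Equiv.swap (1:Fin 5) 2,
  Equiv.swap (0:Fin 5) 4 * Equiv.swap (4:Fin 5) 1 * Equiv.swap (1:Fin 5) 2 * Equiv.swap (2:Fin 5) 3,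
  Equiv.swap (0:Fin 5) 4 * Equiv.swap (4:Fin 5) 1 * Equiv.swap (1:Fin 5) 3 * Equiv.swap (3:Fin 5) 2,
  Equiv.swap (0:Fin 5) 4 * Equiv.swap (4:Fin 5) 2 * Equiv.swap (2:Fin 5) 1 * Equiv.swap (1:Fin 5) 3,
  Equiv.swap (0:Fin 5) 4 * Equiv.swap (1:Fin 5) 3]

/-- A fixed 5-cycle `(0 1 2 3 4)`. -/
def rr : Perm (Fin 5) := Equiv.swap 0 1 * Equiv.swap 1 2 * Equiv.swap 2 3 * Equiv.swap 3 4

/-- `g` preserves the pair `{p, q}` (pointwise or by swapping). -/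
def Apred (g : Perm (Fin 5)) (p q : Fin 5) : Prop :=
  (g p = p ∧ g q = q) ∨ (g p = q ∧ g q = p)

instance (g : Perm (Fin 5)) (p q : Fin 5) : Decidable (Apred g p q) := by
  unfold Apred; infer_instance

theorem rr_sign : Equiv.Perm.sign rr = 1 := by decide

theorem rr_ne : rr ≠ 1 := by decide

theorem LA_sign : ∀ c ∈ LA, Equiv.Perm.sign c = 1 := by decide

theorem evenmem : ∀ g : Perm (Fin 5), Equiv.Perm.sign g = 1 → g ∈ LA := by decide

theorem orderfact : ∀ g ∈ LA, g ^ 2 = 1 ∨ g ^ 3 = 1 ∨ g ^ 5 = 1 := by decide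

theorem notApred : ∀ p q : Fin 5, ¬ Apred rr p q := by decide

theorem conj5 : ∀ w ∈ LA, w ^ 5 = 1 → w ≠ 1 →
    ∃ c ∈ LA, c * w * c⁻¹ = rr ∨ c * (w * w) * c⁻¹ = rr := by decide

set_option synthInstance.maxHeartbeats 400000 in
set_option synthInstance.maxSize 100000 in
theorem mainlem : ∀ x ∈ LA, (x ^ 2 = 1 ∨ x ^ 3 = 1) → ∀ y ∈ LA, (y ^ 2 = 1 ∨ y ^ 3 = 1) →
    ((x * y) ^ 2 = 1 ∨ (x * y) ^ 3 = 1) →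
    ∃ p q : Fin 5, Apred x p q ∧ Apred y p q := by decide


/-- For `x, y, z` in a group `G`, `Σ(x,y,z)` is the union of the conjugacy classes of all
powers of `x`, all powers of `y`, and all powers of `z`. -/
def SigmaSet {G : Type*} [Group G] (x y z : G) : Set G :=
  {g | ∃ n : ℕ, IsConj (x ^ n) g ∨ IsConj (y ^ n) g ∨ IsConj (z ^ n) g}

/-- An unmixed Beauville structure for a group `G`. -/
def IsUnmixedBeauville {G : Type*} [Group G] (x₁ y₁ x₂ y₂ : G) : Prop :=
  Subgroup.closure {x₁, y₁} = ⊤ ∧ Subgroup.closure {x₂, y₂} = ⊤ ∧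
    SigmaSet x₁ y₁ (x₁ * y₁)⁻¹ ∩ SigmaSet x₂ y₂ (x₂ * y₂)⁻¹ = {1}

abbrev A5 := alternatingGroup (Fin 5)

def g5 : A5 := ⟨rr, Equiv.Perm.mem_alternatingGroup.mpr rr_sign⟩

/-- The subgroup of `A₅` preserving the pair `{p, q}`. -/
def Hsub (p q : Fin 5) : Subgroup A5 where
  carrier := {g | Apred (g : Perm (Fin 5)) p q}
  one_mem' := by unfold Apred; simp
  mul_mem' := by
    intro a b ha hb
    unfold Apred at *
    simp only [Set.mem_setOf_eq, Subgroup.coe_mul, Perm.mul_apply] at *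
    rcases ha with ⟨h1, h2⟩ | ⟨h1, h2⟩ <;> rcases hb with ⟨h3, h4⟩ | ⟨h3, h4⟩
    · exact Or.inl ⟨by rw [h3, h1], by rw [h4, h2]⟩
    · exact Or.inr ⟨by rw [h3, h2], by rw [h4, h1]⟩
    · exact Or.inr ⟨by rw [h3, h1], by rw [h4, h2]⟩
    · exact Or.inl ⟨by rw [h3, h2], by rw [h4, h1]⟩
  inv_mem' := by
    intro a ha
    unfold Apred at *
    simp only [Set.mem_setOf_eq, Subgroup.coe_inv] at *
    rcases ha with ⟨h1, h2⟩ | ⟨h1, h2⟩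
    · exact Or.inl ⟨by rw [Perm.inv_eq_iff_eq]; exact h1.symm,
        by rw [Perm.inv_eq_iff_eq]; exact h2.symm⟩
    · exact Or.inr ⟨by rw [Perm.inv_eq_iff_eq]; exact h2.symm,
        by rw [Perm.inv_eq_iff_eq]; exact h1.symm⟩

theorem small_not_top (x y : A5)
    (hx : ((x : Perm (Fin 5)) ^ 2 = 1 ∨ (x : Perm (Fin 5)) ^ 3 = 1))
    (hy : ((y : Perm (Fin 5)) ^ 2 = 1 ∨ (y : Perm (Fin 5)) ^ 3 = 1))
    (hxy : (((x : Perm (Fin 5)) * y) ^ 2 = 1 ∨ ((x : Perm (Fin 5)) * y) ^ 3 = 1)) :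
    Subgroup.closure {x, y} ≠ ⊤ := by
  obtain ⟨p, q, hxA, hyA⟩ :=
    mainlem _ (evenmem _ (Equiv.Perm.mem_alternatingGroup.mp x.2)) hx
      _ (evenmem _ (Equiv.Perm.mem_alternatingGroup.mp y.2)) hy hxy
  intro htop
  have hle : Subgroup.closure {x, y} ≤ Hsub p q := by
    rw [Subgroup.closure_le]
    rintro g (rfl | rfl)
    · exact hxA
    · exact hyA
  rw [htop] at hle
  exact notApred p q (hle (Subgroup.mem_top g5))

theorem helper (w : A5)
    (hsmall : ¬((w : Perm (Fin 5)) ^ 2 = 1 ∨ (w : Perm (Fin 5)) ^ 3 = 1)) :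
    ∃ n : ℕ, IsConj (w ^ n) g5 := by
  have hsign : Equiv.Perm.sign (w : Perm (Fin 5)) = 1 :=
    Equiv.Perm.mem_alternatingGroup.mp w.2
  have hmem := evenmem _ hsign
  have h5 : (w : Perm (Fin 5)) ^ 5 = 1 := by
    rcases orderfact _ hmem with h | h | h
    · exact absurd (Or.inl h) hsmall
    · exact absurd (Or.inr h) hsmall
    · exact h
  have hne : (w : Perm (Fin 5)) ≠ 1 := by
    intro h
    exact hsmall (Or.inl (by rw [h, one_pow]))
  obtain ⟨c, hcLA, hc⟩ := conj5 _ hmem h5 hne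
  have hcs : Equiv.Perm.sign c = 1 := LA_sign c hcLA
  set C : A5 := ⟨c, Equiv.Perm.mem_alternatingGroup.mpr hcs⟩ with hC
  rcases hc with hc | hc
  · refine ⟨1, isConj_iff.mpr ⟨C, Subtype.ext ?_⟩⟩
    show ((C * w ^ 1 * C⁻¹ : A5) : Perm (Fin 5)) = rr
    rw [pow_one]
    simpa using hc
  · refine ⟨2, isConj_iff.mpr ⟨C, Subtype.ext ?_⟩⟩
    show ((C * w ^ 2 * C⁻¹ : A5) : Perm (Fin 5)) = rr
    simpa [pow_two, mul_assoc] using hc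

theorem key (x y : A5) (htop : Subgroup.closure {x, y} = ⊤) :
    g5 ∈ SigmaSet x y (x * y)⁻¹ := by
  by_cases hx : ((x : Perm (Fin 5)) ^ 2 = 1 ∨ (x : Perm (Fin 5)) ^ 3 = 1)
  · by_cases hy : ((y : Perm (Fin 5)) ^ 2 = 1 ∨ (y : Perm (Fin 5)) ^ 3 = 1)
    · by_cases hxy : (((x : Perm (Fin 5)) * y) ^ 2 = 1 ∨ ((x : Perm (Fin 5)) * y) ^ 3 = 1)
      · exact absurd htop (small_not_top x y hx hy hxy)
      · have hz : ¬((((x * y)⁻¹ : A5) : Perm (Fin 5)) ^ 2 = 1 ∨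
            (((x * y)⁻¹ : A5) : Perm (Fin 5)) ^ 3 = 1) := by
          simp only [Subgroup.coe_inv, Subgroup.coe_mul, inv_pow, inv_eq_one]
          exact hxy
        obtain ⟨n, hn⟩ := helper _ hz
        exact ⟨n, Or.inr (Or.inr hn)⟩
    · obtain ⟨n, hn⟩ := helper _ hy
      exact ⟨n, Or.inr (Or.inl hn)⟩
  · obtain ⟨n, hn⟩ := helper _ hx
    exact ⟨n, Or.inl hn⟩

/-- The alternating group `A₅` does not admit an unmixed Beauville structure. -/
theorem A5_no_beauville :
    ¬ ∃ x₁ y₁ x₂ y₂ : alternatingGroup (Fin 5), IsUnmixedBeauville x₁ y₁ x₂ y₂ := by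
  rintro ⟨x₁, y₁, x₂, y₂, h1, h2, h3⟩
  have m1 := key x₁ y₁ h1
  have m2 := key x₂ y₂ h2
  have hmem : g5 ∈ SigmaSet x₁ y₁ (x₁ * y₁)⁻¹ ∩ SigmaSet x₂ y₂ (x₂ * y₂)⁻¹ := ⟨m1, m2⟩
  rw [h3] at hmem
  exact rr_ne (congrArg Subtype.val hmem)
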